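/- If n/(2k) → 1/ρ with ρ > 0 as n, k → ∞, then limsup (1/n)·log(Σ_{|κ|=2k, ℓ(κ)≤m} dim F_n^κ) ≤ m·((1+ρ)log(1+ρ) − ρ log ρ). -/

import Mathlib

open scoped Classical
open Filter

/-- Extension of a partition with at most `m` parts to `n` parts by appending zeros. -/
def extPart (m n : ℕ) (κ : Fin m → ℕ) (i : Fin n) : ℕ :=
  if h : (i : ℕ) < m then κ ⟨i, h⟩ else 0

/-- Weyl dimension formula for `GL(n,ℝ)`:
`dim F_n^κ = Π_{1 ≤ i < j ≤ n} (κ_i − κ_j + j − i)/(j − i)`, with `κ` extended by zeros. -/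
noncomputable def dimF (m n : ℕ) (κ : Fin m → ℕ) : ℝ :=
  ∏ i : Fin n, ∏ j : Fin n,
    if (i : ℕ) < (j : ℕ) then
      (((extPart m n κ i : ℝ) - (extPart m n κ j : ℝ) + ((j : ℕ) : ℝ) - ((i : ℕ) : ℝ)) /
        (((j : ℕ) : ℝ) - ((i : ℕ) : ℝ)))
    else 1

/-- The set of partitions `κ_1 ≥ ... ≥ κ_m ≥ 0` of degree `2k` with at most `m` parts. -/
noncomputable def partitionSet (m k : ℕ) : Finset (Fin m → ℕ) :=
  (Fintype.piFinset fun _ : Fin m => Finset.range (2 * k + 1)).filter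
    fun κ => (∀ i j : Fin m, i ≤ j → κ j ≤ κ i) ∧ ∑ i, κ i = 2 * k


lemma prod_ratio_eq_choose (K N : ℕ) :
    ∏ d ∈ Finset.range N, (((K : ℝ) + (d + 1)) / (d + 1)) = ((K + N).choose K : ℝ) := by
  induction N with
  | zero => simp
  | succ N ih =>
    rw [Finset.prod_range_succ, ih]
    have key : (K + N + 1) * (K + N).choose K = (K + N + 1).choose K * (N + 1) := by
      have h1 : (K + N).choose K = (K + N).choose N := Nat.choose_symm_add
      have h2 : (K + N + 1).choose K = (K + N + 1).choose (N + 1) := by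
        have : K + N + 1 = K + (N + 1) := by ring
        rw [this, Nat.choose_symm_add]
      rw [h1, h2]
      have := Nat.add_one_mul_choose_eq (K + N) N
      simpa [Nat.succ_eq_add_one] using this
    have hN : ((N : ℝ) + 1) ≠ 0 := by positivity
    have keyR : ((K : ℝ) + N + 1) * ((K + N).choose K : ℝ)
        = ((K + N + 1).choose K : ℝ) * ((N : ℝ) + 1) := by exact_mod_cast key
    have : (K : ℝ) + (N + 1) = (K : ℝ) + N + 1 := by ring
    rw [this]
    simp only [show K + (N + 1) = K + N + 1 from by omega]
    field_simp
    push_cast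
    nlinarith [keyR]

lemma choose_le_pow_div (K N : ℕ) {x : ℝ} (hx : 0 < x) :
    (((K + N).choose K : ℕ) : ℝ) ≤ (1 + x) ^ (K + N) / x ^ K := by
  rw [le_div_iff₀ (by positivity)]
  have hb := add_pow x 1 (K + N)
  have hterm : ((K + N).choose K : ℝ) * x ^ K
      ≤ ∑ i ∈ Finset.range (K + N + 1), x ^ i * 1 ^ (K + N - i) * ((K + N).choose i : ℝ) := by
    have hmem : K ∈ Finset.range (K + N + 1) := Finset.mem_range.2 (by omega)
    have := Finset.single_le_sum
      (f := fun i => x ^ i * 1 ^ (K + N - i) * ((K + N).choose i : ℝ))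
      (fun i _ => by positivity) hmem
    calc ((K + N).choose K : ℝ) * x ^ K
        = x ^ K * 1 ^ (K + N - K) * ((K + N).choose K : ℝ) := by ring
      _ ≤ _ := this
  calc ((K + N).choose K : ℝ) * x ^ K ≤ _ := hterm
    _ = (x + 1) ^ (K + N) := hb.symm
    _ = (1 + x) ^ (K + N) := by ring

section main

variable {m n k : ℕ} {κ : Fin m → ℕ}

/-- extended partition function on ℕ -/
def ePart (m : ℕ) (κ : Fin m → ℕ) (t : ℕ) : ℕ :=
  if h : t < m then κ ⟨t, h⟩ else 0

/-- the factor function on ℕ × ℕ -/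
noncomputable def fac (m : ℕ) (κ : Fin m → ℕ) (a b : ℕ) : ℝ :=
  if a < b then
    (((ePart m κ a : ℝ) - (ePart m κ b : ℝ) + (b : ℝ) - (a : ℝ)) / ((b : ℝ) - (a : ℝ)))
  else 1

lemma dimF_eq_prod_range (m n : ℕ) (κ : Fin m → ℕ) :
    dimF m n κ = ∏ i ∈ Finset.range n, ∏ j ∈ Finset.range n, fac m κ i j := by
  unfold dimF
  calc (∏ i : Fin n, ∏ j : Fin n,
      if (i : ℕ) < (j : ℕ) then
        (((extPart m n κ i : ℝ) - (extPart m n κ j : ℝ) + ((j : ℕ) : ℝ) - ((i : ℕ) : ℝ)) /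
          (((j : ℕ) : ℝ) - ((i : ℕ) : ℝ)))
      else 1)
      = ∏ i : Fin n, ∏ j ∈ Finset.range n, fac m κ (i : ℕ) j :=
        Finset.prod_congr rfl (fun i _ => Fin.prod_univ_eq_prod_range (fac m κ (i : ℕ)) n)
    _ = _ := Fin.prod_univ_eq_prod_range (fun i => ∏ j ∈ Finset.range n, fac m κ i j) n

lemma partitionSet_mem (hκ : κ ∈ partitionSet m k) :
    (∀ i, κ i ≤ 2 * k) ∧ (∀ i j : Fin m, i ≤ j → κ j ≤ κ i) ∧ ∑ i, κ i = 2 * k := by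
  rw [partitionSet, Finset.mem_filter, Fintype.mem_piFinset] at hκ
  exact ⟨fun i => by have := hκ.1 i; rw [Finset.mem_range] at this; omega, hκ.2.1, hκ.2.2⟩

lemma ePart_le (hκ : κ ∈ partitionSet m k) (t : ℕ) : ePart m κ t ≤ 2 * k := by
  unfold ePart; split
  · exact (partitionSet_mem hκ).1 _
  · omega

lemma ePart_anti (hκ : κ ∈ partitionSet m k) {s t : ℕ} (hst : s ≤ t) :
    ePart m κ t ≤ ePart m κ s := by
  unfold ePart
  by_cases ht : t < m
  · have hs : s < m := lt_of_le_of_lt hst ht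
    simp only [dif_pos ht, dif_pos hs]
    exact (partitionSet_mem hκ).2.1 ⟨s, hs⟩ ⟨t, ht⟩ hst
  · simp [dif_neg ht]

lemma one_le_fac (hκ : κ ∈ partitionSet m k) (a b : ℕ) : 1 ≤ fac m κ a b := by
  unfold fac; split
  · rename_i hab
    have hd : (0 : ℝ) < (b : ℝ) - a := by
      have : (a : ℝ) < b := by exact_mod_cast hab
      linarith
    rw [le_div_iff₀ hd]
    have : (ePart m κ b : ℝ) ≤ (ePart m κ a : ℝ) := by
      exact_mod_cast ePart_anti hκ hab.le
    linarith
  · exact le_refl 1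

lemma fac_le (hκ : κ ∈ partitionSet m k) (a b : ℕ) :
    fac m κ a b ≤ if a < b ∧ a < m then ((2 * k : ℝ) + ((b : ℝ) - a)) / ((b : ℝ) - a) else 1 := by
  by_cases hab : a < b
  · have hd : (0 : ℝ) < (b : ℝ) - a := by
      have : (a : ℝ) < b := by exact_mod_cast hab
      linarith
    by_cases ham : a < m
    · rw [if_pos ⟨hab, ham⟩]
      unfold fac
      rw [if_pos hab, div_le_div_iff₀ hd hd]
      have h1 : (ePart m κ a : ℝ) ≤ 2 * k := by exact_mod_cast ePart_le hκ a
      have h2 : (0 : ℝ) ≤ (ePart m κ b : ℝ) := by positivity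
      nlinarith
    · rw [if_neg (by tauto)]
      unfold fac
      rw [if_pos hab]
      have hea : ePart m κ a = 0 := by unfold ePart; rw [dif_neg ham]
      have heb : ePart m κ b = 0 := by
        unfold ePart; rw [dif_neg (by omega)]
      rw [hea, heb]
      simp [div_self hd.ne']
  · unfold fac
    rw [if_neg hab, if_neg (by tauto)]

lemma one_le_dimF (hκ : κ ∈ partitionSet m k) : 1 ≤ dimF m n κ := by
  rw [dimF_eq_prod_range]
  calc (1 : ℝ) = ∏ _i ∈ Finset.range n, (1 : ℝ) := by simp
    _ ≤ _ := Finset.prod_le_prod (fun _ _ => zero_le_one) (fun i _ => by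
        calc (1 : ℝ) = ∏ _j ∈ Finset.range n, (1 : ℝ) := by simp
          _ ≤ _ := Finset.prod_le_prod (fun _ _ => zero_le_one)
              (fun j _ => one_le_fac hκ i j))

lemma dimF_le_choose (hmn : m ≤ n) (hκ : κ ∈ partitionSet m k) :
    dimF m n κ ≤ (((2 * k + n).choose (2 * k) : ℕ) : ℝ) ^ m := by
  rw [dimF_eq_prod_range]
  set G : ℕ → ℕ → ℝ := fun a b =>
    if a < b ∧ a < m then ((2 * k : ℝ) + ((b : ℝ) - a)) / ((b : ℝ) - a) else 1 with hG
  have hstep1 : (∏ i ∈ Finset.range n, ∏ j ∈ Finset.range n, fac m κ i j)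
      ≤ ∏ i ∈ Finset.range n, ∏ j ∈ Finset.range n, G i j := by
    refine Finset.prod_le_prod (fun i _ => Finset.prod_nonneg fun j _ =>
      le_trans zero_le_one (one_le_fac hκ i j)) (fun i _ => ?_)
    exact Finset.prod_le_prod (fun j _ => le_trans zero_le_one (one_le_fac hκ i j))
      (fun j _ => fac_le hκ i j)
  have hinner : ∀ i < m, ∏ j ∈ Finset.range n, G i j
      = (((2 * k + (n - (i + 1))).choose (2 * k) : ℕ) : ℝ) := by
    intro i him
    have h1 : ∏ j ∈ Finset.range n, G i j = ∏ j ∈ Finset.Ico (i + 1) n, G i j := by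
      refine (Finset.prod_subset ?_ ?_).symm
      · intro j hj
        rw [Finset.mem_Ico] at hj
        exact Finset.mem_range.2 hj.2
      · intro j hj hj2
        rw [Finset.mem_range] at hj
        rw [Finset.mem_Ico] at hj2
        have : ¬ (i < j) := by omega
        simp [hG, this]
    have h2 : ∏ j ∈ Finset.Ico (i + 1) n, G i j
        = ∏ j ∈ Finset.Ico (i + 1) n, ((2 * k : ℝ) + ((j : ℝ) - i)) / ((j : ℝ) - i) := by
      refine Finset.prod_congr rfl (fun j hj => ?_)
      rw [Finset.mem_Ico] at hj
      simp [hG, show i < j by omega, him]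
    have h3 : ∏ j ∈ Finset.Ico (i + 1) n, ((2 * k : ℝ) + ((j : ℝ) - i)) / ((j : ℝ) - i)
        = ∏ d ∈ Finset.range (n - (i + 1)), ((2 * k : ℝ) + ((d : ℝ) + 1)) / ((d : ℝ) + 1) := by
      rw [Finset.prod_Ico_eq_prod_range]
      refine Finset.prod_congr rfl (fun d _ => ?_)
      push_cast
      ring_nf
    rw [h1, h2, h3]
    have := prod_ratio_eq_choose (2 * k) (n - (i + 1))
    rw [← this]
    refine Finset.prod_congr rfl (fun d _ => ?_)
    push_cast
    ring_nf
  have hstep2 : (∏ i ∈ Finset.range n, ∏ j ∈ Finset.range n, G i j)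
      = ∏ i ∈ Finset.range m, ∏ j ∈ Finset.range n, G i j := by
    refine (Finset.prod_subset (Finset.range_subset_range.2 hmn) ?_).symm
    intro i hi hi2
    rw [Finset.mem_range] at hi hi2
    refine Finset.prod_eq_one (fun j _ => ?_)
    simp [hG, show ¬ (i < m) by omega]
  have hstep3 : (∏ i ∈ Finset.range m, ∏ j ∈ Finset.range n, G i j)
      ≤ ∏ _i ∈ Finset.range m, (((2 * k + n).choose (2 * k) : ℕ) : ℝ) := by
    refine Finset.prod_le_prod (fun i hi => ?_) (fun i hi => ?_)
    · rw [hinner i (Finset.mem_range.1 hi)]; positivity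
    · rw [hinner i (Finset.mem_range.1 hi)]
      exact_mod_cast Nat.choose_le_choose (2 * k) (by omega)
  calc _ ≤ _ := hstep1
    _ = _ := hstep2
    _ ≤ _ := hstep3
    _ = _ := by rw [Finset.prod_const, Finset.card_range]

lemma card_partitionSet_le : (partitionSet m k).card ≤ (2 * k + 1) ^ m := by
  calc (partitionSet m k).card
      ≤ (Fintype.piFinset fun _ : Fin m => Finset.range (2 * k + 1)).card :=
        Finset.card_filter_le _ _
    _ = (2 * k + 1) ^ m := by
        rw [Fintype.card_piFinset]
        simp

lemma partitionSet_nonempty (hm : 1 ≤ m) : (partitionSet m k).Nonempty := by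
  refine ⟨fun i => if i = (⟨0, hm⟩ : Fin m) then 2 * k else 0, ?_⟩
  rw [partitionSet, Finset.mem_filter, Fintype.mem_piFinset]
  refine ⟨fun i => ?_, fun i j hij => ?_, ?_⟩
  · rw [Finset.mem_range]; split <;> omega
  · by_cases hj : j = (⟨0, hm⟩ : Fin m)
    · have hi : i = (⟨0, hm⟩ : Fin m) := by
        rw [hj] at hij
        have : (i : ℕ) ≤ 0 := hij
        exact Fin.ext (show (i : ℕ) = 0 by omega)
      simp [hi, hj]
    · simp only [if_neg hj]
      exact Nat.zero_le _
  · rw [Finset.sum_ite_eq' Finset.univ (⟨0, hm⟩ : Fin m) (fun _ => 2 * k)]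
    simp

end main

/-- if `n/(2k) → 1/ρ` with `ρ > 0` as `n, k → ∞`, then
`limsup (1/n)·log(Σ_{|κ|=2k, ℓ(κ)≤m} dim F_n^κ) ≤ m((1+ρ)log(1+ρ) − ρ log ρ)`. -/
theorem stmt18 (m : ℕ) (hm : 1 ≤ m) (ρ : ℝ) (hρ : 0 < ρ)
    (n k : ℕ → ℕ) (hn : Tendsto n atTop atTop) (hk : Tendsto k atTop atTop)
    (hmn : ∀ j, m ≤ n j)
    (hratio : Tendsto (fun j => (n j : ℝ) / (2 * (k j : ℝ))) atTop (nhds (1 / ρ))) :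
    Filter.limsup (fun j => (1 / (n j : ℝ)) *
        Real.log (∑ κ ∈ partitionSet m (k j), dimF m (n j) κ)) atTop ≤
      m * ((1 + ρ) * Real.log (1 + ρ) - ρ * Real.log ρ) := by
  have h1ρ : (0 : ℝ) < 1 + ρ := by linarith
  set a : ℕ → ℝ := fun j => (1 / (n j : ℝ)) *
      Real.log (∑ κ ∈ partitionSet m (k j), dimF m (n j) κ) with ha_def
  set u : ℕ → ℝ := fun j => (m : ℝ) * (Real.log (2 * (k j : ℝ) + 1) / (n j : ℝ)) +
      (m : ℝ) * (((2 * (k j : ℝ) / (n j : ℝ)) + 1) * Real.log (1 + ρ) -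
        (2 * (k j : ℝ) / (n j : ℝ)) * Real.log ρ) with hu_def
  have hnpos : ∀ j, (0 : ℝ) < (n j : ℝ) := fun j => by
    have := hmn j; exact_mod_cast Nat.lt_of_lt_of_le (by omega) this
  have hA1 : ∀ j, (1 : ℝ) ≤ ∑ κ ∈ partitionSet m (k j), dimF m (n j) κ := by
    intro j
    obtain ⟨κ0, hκ0⟩ := partitionSet_nonempty (k := k j) hm
    exact le_trans (one_le_dimF hκ0)
      (Finset.single_le_sum (fun κ hκ => le_trans zero_le_one (one_le_dimF hκ)) hκ0)
  have ha0 : ∀ j, 0 ≤ a j := fun j => by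
    have := hA1 j
    have hl : 0 ≤ Real.log (∑ κ ∈ partitionSet m (k j), dimF m (n j) κ) :=
      Real.log_nonneg this
    have : 0 ≤ 1 / (n j : ℝ) := by positivity
    exact mul_nonneg this hl
  -- the pointwise bound
  have hle : ∀ j, a j ≤ u j := by
    intro j
    set N := n j
    set K := k j
    have hN : (0 : ℝ) < (N : ℝ) := hnpos j
    set C : ℕ := (2 * K + N).choose (2 * K) with hC_def
    have hCpos : 0 < C := Nat.choose_pos (by omega)
    have hAle : (∑ κ ∈ partitionSet m K, dimF m N κ)
        ≤ ((2 * K + 1 : ℕ) : ℝ) ^ m * (C : ℝ) ^ m := by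
      calc (∑ κ ∈ partitionSet m K, dimF m N κ)
          ≤ (partitionSet m K).card • ((C : ℝ) ^ m) :=
            Finset.sum_le_card_nsmul _ _ _ (fun κ hκ => dimF_le_choose (hmn j) hκ)
        _ = ((partitionSet m K).card : ℝ) * (C : ℝ) ^ m := by rw [nsmul_eq_mul]
        _ ≤ ((2 * K + 1 : ℕ) : ℝ) ^ m * (C : ℝ) ^ m := by
            refine mul_le_mul_of_nonneg_right ?_ (by positivity)
            have := card_partitionSet_le (m := m) (k := K)
            calc ((partitionSet m K).card : ℝ) ≤ (((2 * K + 1) ^ m : ℕ) : ℝ) := by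
                  exact_mod_cast this
              _ = ((2 * K + 1 : ℕ) : ℝ) ^ m := by push_cast; ring
    have hlogA : Real.log (∑ κ ∈ partitionSet m K, dimF m N κ)
        ≤ (m : ℝ) * Real.log (2 * (K : ℝ) + 1) +
          (m : ℝ) * ((2 * (K : ℝ) + (N : ℝ)) * Real.log (1 + ρ) - 2 * (K : ℝ) * Real.log ρ) := by
      have hApos : (0 : ℝ) < ∑ κ ∈ partitionSet m K, dimF m N κ := lt_of_lt_of_le one_pos (hA1 j)
      have step1 := Real.log_le_log hApos hAle
      have hx : ((2 * K + 1 : ℕ) : ℝ) ^ m ≠ 0 := by positivity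
      have hy : ((C : ℕ) : ℝ) ^ m ≠ 0 := by positivity
      rw [Real.log_mul hx hy, Real.log_pow, Real.log_pow] at step1
      have hlogC : Real.log (C : ℝ)
          ≤ (2 * (K : ℝ) + (N : ℝ)) * Real.log (1 + ρ) - 2 * (K : ℝ) * Real.log ρ := by
        have hCle := choose_le_pow_div (2 * K) N hρ
        have : Real.log (C : ℝ) ≤ Real.log ((1 + ρ) ^ (2 * K + N) / ρ ^ (2 * K)) :=
          Real.log_le_log (by exact_mod_cast hCpos) hCle
        rw [Real.log_div (by positivity) (by positivity), Real.log_pow, Real.log_pow] at this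
        calc Real.log (C : ℝ) ≤ _ := this
          _ = (2 * (K : ℝ) + (N : ℝ)) * Real.log (1 + ρ) - 2 * (K : ℝ) * Real.log ρ := by
              push_cast; ring
      calc Real.log (∑ κ ∈ partitionSet m K, dimF m N κ)
          ≤ (m : ℝ) * Real.log ((2 * K + 1 : ℕ) : ℝ) + (m : ℝ) * Real.log (C : ℝ) := step1
        _ ≤ (m : ℝ) * Real.log (2 * (K : ℝ) + 1) + (m : ℝ) *
              ((2 * (K : ℝ) + (N : ℝ)) * Real.log (1 + ρ) - 2 * (K : ℝ) * Real.log ρ) := by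
            have h1 : ((2 * K + 1 : ℕ) : ℝ) = 2 * (K : ℝ) + 1 := by push_cast; ring
            rw [h1]
            exact add_le_add (le_refl _) (mul_le_mul_of_nonneg_left hlogC (by positivity))
    have := mul_le_mul_of_nonneg_left hlogA (le_of_lt (by positivity : (0:ℝ) < 1 / (N : ℝ)))
    calc a j = (1 / (N : ℝ)) * Real.log (∑ κ ∈ partitionSet m K, dimF m N κ) := rfl
      _ ≤ (1 / (N : ℝ)) * ((m : ℝ) * Real.log (2 * (K : ℝ) + 1) +
            (m : ℝ) * ((2 * (K : ℝ) + (N : ℝ)) * Real.log (1 + ρ) - 2 * (K : ℝ) * Real.log ρ)) :=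
          this
      _ = u j := by
          show _ = (m : ℝ) * (Real.log (2 * (K : ℝ) + 1) / (N : ℝ)) +
            (m : ℝ) * (((2 * (K : ℝ) / (N : ℝ)) + 1) * Real.log (1 + ρ) -
              (2 * (K : ℝ) / (N : ℝ)) * Real.log ρ)
          field_simp
  -- limit of u
  have ht2 : Tendsto (fun j => 2 * (k j : ℝ) / (n j : ℝ)) atTop (nhds ρ) := by
    have hinv := hratio.inv₀ (by positivity)
    have h1 : (1 / ρ)⁻¹ = ρ := by field_simp
    rw [h1] at hinv
    refine hinv.congr (fun j => ?_)
    rw [inv_div]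
  have hkR : Tendsto (fun j => 2 * (k j : ℝ) + 1) atTop atTop := by
    have : Tendsto (fun j => (k j : ℝ)) atTop atTop :=
      tendsto_natCast_atTop_atTop.comp hk
    exact tendsto_atTop_add_const_right _ 1 (this.const_mul_atTop two_pos)
  have hlogdiv : Tendsto (fun x : ℝ => Real.log x / x) atTop (nhds 0) :=
    Real.isLittleO_log_id_atTop.tendsto_div_nhds_zero
  have hinvn : Tendsto (fun j => 1 / (n j : ℝ)) atTop (nhds 0) :=
    tendsto_one_div_atTop_nhds_zero_nat.comp hn
  have hfrac : Tendsto (fun j => (2 * (k j : ℝ) + 1) / (n j : ℝ)) atTop (nhds (ρ + 0)) := by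
    refine Tendsto.congr (fun j => ?_) (ht2.add hinvn)
    rw [← add_div]
  have hlog0 : Tendsto (fun j => Real.log (2 * (k j : ℝ) + 1) / (n j : ℝ)) atTop (nhds 0) := by
    have hcomp : Tendsto (fun j => Real.log (2 * (k j : ℝ) + 1) / (2 * (k j : ℝ) + 1))
        atTop (nhds 0) := hlogdiv.comp hkR
    have := hcomp.mul hfrac
    rw [zero_mul] at this
    refine this.congr (fun j => ?_)
    have h2 : (2 * (k j : ℝ) + 1) ≠ 0 := by positivity
    field_simp
  have hU : Tendsto u atTop
      (nhds ((m : ℝ) * 0 + (m : ℝ) * ((ρ + 1) * Real.log (1 + ρ) - ρ * Real.log ρ))) := by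
    exact ((hlog0.const_mul (m : ℝ)).add
      ((((ht2.add_const 1).mul_const (Real.log (1 + ρ))).sub
        (ht2.mul_const (Real.log ρ))).const_mul (m : ℝ)))
  have hL : (m : ℝ) * 0 + (m : ℝ) * ((ρ + 1) * Real.log (1 + ρ) - ρ * Real.log ρ)
      = m * ((1 + ρ) * Real.log (1 + ρ) - ρ * Real.log ρ) := by ring
  rw [hL] at hU
  calc Filter.limsup a atTop ≤ Filter.limsup u atTop := by
        refine Filter.limsup_le_limsup (Filter.Eventually.of_forall hle) ?_ ?_
        · exact Filter.IsBoundedUnder.isCoboundedUnder_le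
            (Filter.isBoundedUnder_of ⟨0, fun j => ha0 j⟩)
        · exact hU.isBoundedUnder_le
    _ = _ := hU.limsup_eq
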